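/- Let θ > 0, q > 0, and 0 < μ ≤ q be real numbers, and let (a_k)_{k≥0} be a sequence of nonnegative reals. Define b_n := (∑_{k=n}^{∞} a_k^{μ})^{1/μ} for each n ≥ 0 (allowing the value +∞). Then there is a constant C depending only on θ, q, μ such that ∑_{n=0}^{∞} 2^{n·θ·q} · b_n^{q} ≤ C · ∑_{n=0}^{∞} 2^{n·θ·q} · a_n^{q}. -/

import Mathlib

open scoped ENNReal

private lemma jensen_tsum_aux {r : ℝ} (hr : 1 ≤ r) (w x : ℕ → ℝ≥0∞)
    (hw : ∑' i, w i ≠ ∞) :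
    (∑' i, w i * x i) ^ r ≤ (∑' i, w i) ^ (r - 1) * ∑' i, w i * x i ^ r := by
  have hr0 : (0:ℝ) < r := lt_of_lt_of_le one_pos hr
  have hfin : ∀ s : Finset ℕ,
      (∑ i ∈ s, w i * x i) ^ r ≤ (∑' i, w i) ^ (r - 1) * ∑' i, w i * x i ^ r := by
    intro s
    by_cases hW0 : (∑ i ∈ s, w i) = 0
    · have hz : ∑ i ∈ s, w i * x i = 0 := by
        refine Finset.sum_eq_zero fun i hi => ?_
        have : w i = 0 := (Finset.sum_eq_zero_iff.mp hW0) i hi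
        simp [this]
      rw [hz, ENNReal.zero_rpow_of_pos hr0]
      exact zero_le
    · set W := ∑ i ∈ s, w i with hWdef
      have hWt : W ≠ ∞ := ne_top_of_le_ne_top hw (ENNReal.sum_le_tsum s)
      have hWW : W * W⁻¹ = 1 := ENNReal.mul_inv_cancel hW0 hWt
      have hsum1 : ∑ i ∈ s, W⁻¹ * w i = 1 := by
        rw [← Finset.mul_sum, ENNReal.inv_mul_cancel hW0 hWt]
      have key := ENNReal.rpow_arith_mean_le_arith_mean_rpow s (fun i => W⁻¹ * w i) x hsum1 hr
      have hL : ∑ i ∈ s, W⁻¹ * w i * x i = W⁻¹ * ∑ i ∈ s, w i * x i := by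
        rw [Finset.mul_sum]; exact Finset.sum_congr rfl fun i _ => (mul_assoc _ _ _)
      have hR : ∑ i ∈ s, W⁻¹ * w i * x i ^ r = W⁻¹ * ∑ i ∈ s, w i * x i ^ r := by
        rw [Finset.mul_sum]; exact Finset.sum_congr rfl fun i _ => (mul_assoc _ _ _)
      simp only [hL, hR] at key
      have h1 : (∑ i ∈ s, w i * x i) ^ r
          = W ^ r * (W⁻¹ * ∑ i ∈ s, w i * x i) ^ r := by
        rw [← ENNReal.mul_rpow_of_nonneg _ _ hr0.le, ← mul_assoc, hWW, one_mul]
      calc (∑ i ∈ s, w i * x i) ^ r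
          = W ^ r * (W⁻¹ * ∑ i ∈ s, w i * x i) ^ r := h1
        _ ≤ W ^ r * (W⁻¹ * ∑ i ∈ s, w i * x i ^ r) := mul_le_mul_right key _
        _ = (W ^ r * W⁻¹) * ∑ i ∈ s, w i * x i ^ r := by ring
        _ = W ^ (r - 1) * ∑ i ∈ s, w i * x i ^ r := by
            rw [ENNReal.rpow_sub _ _ hW0 hWt, ENNReal.rpow_one, div_eq_mul_inv]
        _ ≤ (∑' i, w i) ^ (r - 1) * ∑' i, w i * x i ^ r := by
            exact mul_le_mul' (ENNReal.rpow_le_rpow (ENNReal.sum_le_tsum s) (by linarith))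
              (ENNReal.sum_le_tsum s)
  have hts : Filter.Tendsto (fun s : Finset ℕ => (∑ i ∈ s, w i * x i) ^ r)
      Filter.atTop (nhds ((∑' i, w i * x i) ^ r)) :=
    (ENNReal.continuous_rpow_const.tendsto _).comp ENNReal.summable.hasSum
  exact le_of_tendsto hts (Filter.Eventually.of_forall hfin)

/-- Discrete Hardy inequality (tail version).  For `θ > 0`, `q > 0`, `0 < μ ≤ q` there is a
constant `C` (depending only on `θ, q, μ`) such that for every sequence `(a_k)` of
nonnegative reals, with `b_n := (∑_{k=n}^∞ a_k^μ)^{1/μ}` (possibly `+∞`),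
`∑_n 2^{nθq} b_n^q ≤ C · ∑_n 2^{nθq} a_n^q`.  Formulated in `ℝ≥0∞` so that infinite
values of `b_n` are allowed. -/
theorem discrete_hardy_tail (θ q μ : ℝ) (hθ : 0 < θ) (hq : 0 < q) (hμ : 0 < μ)
    (hμq : μ ≤ q) :
    ∃ C : ℝ≥0∞, C ≠ ∞ ∧ ∀ a : ℕ → ℝ≥0∞, (∀ k, a k ≠ ∞) →
      (∑' n : ℕ, (2 : ℝ≥0∞) ^ ((n : ℝ) * θ * q) *
          ((∑' k : ℕ, if n ≤ k then (a k) ^ μ else 0) ^ (1 / μ)) ^ q)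
        ≤ C * ∑' n : ℕ, (2 : ℝ≥0∞) ^ ((n : ℝ) * θ * q) * (a n) ^ q := by
  classical
  have hμ0 : μ ≠ 0 := ne_of_gt hμ
  set r : ℝ := q / μ with hrdef
  have hr1 : 1 ≤ r := (one_le_div hμ).mpr hμq
  have hrpos : (0:ℝ) < r := lt_of_lt_of_le one_pos hr1
  have hμr : μ * r = q := by rw [hrdef]; field_simp
  set T : ℝ := θ * μ with hTdef
  have hT0 : 0 < T := mul_pos hθ hμ
  have h2 : (2:ℝ≥0∞) ≠ 0 := two_ne_zero
  have h2t : (2:ℝ≥0∞) ≠ ∞ := ENNReal.ofNat_ne_top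
  set u : ℝ≥0∞ := 2 ^ (-T) with hudef
  have hu1 : u < 1 := ENNReal.rpow_lt_one_of_one_lt_of_neg ENNReal.one_lt_two (by linarith : -T < 0)
  set A : ℝ≥0∞ := (1 - u)⁻¹ with hAdef
  have hA : A ≠ ∞ := by
    rw [hAdef, Ne, ENNReal.inv_eq_top]
    intro h
    exact absurd (tsub_eq_zero_iff_le.mp h) (not_le.mpr hu1)
  have geom : ∑' j : ℕ, u ^ j = A := ENNReal.tsum_geometric u
  have upow : ∀ j : ℕ, (2:ℝ≥0∞) ^ ((-T) * (j:ℝ)) = u ^ j := fun j => by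
    rw [ENNReal.rpow_mul, ENNReal.rpow_natCast, hudef]
  refine ⟨A ^ (r - 1) * A, ENNReal.mul_ne_top
    (ENNReal.rpow_ne_top_of_nonneg (by linarith) hA) hA, ?_⟩
  intro a ha
  set w : ℕ → ℕ → ℝ≥0∞ := fun n k =>
    if n ≤ k then (2:ℝ≥0∞) ^ (-(((k:ℝ) - n) * T)) else 0 with hwdef
  set x : ℕ → ℕ → ℝ≥0∞ := fun n k =>
    if n ≤ k then a k ^ μ * (2:ℝ≥0∞) ^ (((k:ℝ) - n) * T) else 0 with hxdef
  set F : ℕ → ℕ → ℝ≥0∞ := fun n k =>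
    if n ≤ k then (2:ℝ≥0∞) ^ ((k:ℝ) * θ * q - ((k:ℝ) - n) * T) * a k ^ q else 0 with hFdef
  have hwx : ∀ n k, w n k * x n k = if n ≤ k then a k ^ μ else 0 := by
    intro n k
    by_cases h : n ≤ k
    · simp only [hwdef, hxdef, if_pos h]
      have h1 : (2:ℝ≥0∞) ^ (-(((k:ℝ)-n)*T)) * 2 ^ (((k:ℝ)-n)*T) = 1 := by
        rw [← ENNReal.rpow_add _ _ h2 h2t, neg_add_cancel, ENNReal.rpow_zero]
      rw [mul_left_comm, ← mul_assoc, mul_comm (a k ^ μ), mul_assoc,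
        ← mul_left_comm, h1, mul_one]
    · simp [hwdef, hxdef, h]
  have hwsum : ∀ n, ∑' k, w n k = A := by
    intro n
    have hinj : Function.Injective (fun j : ℕ => n + j) := fun a b h => by
      simpa using h
    have hsupp : Function.support (w n) ⊆ Set.range (fun j : ℕ => n + j) := by
      intro k hk
      rcases le_or_gt n k with h | h
      · exact ⟨k - n, show n + (k - n) = k by omega⟩
      · exact absurd (by simp [hwdef, not_le.mpr h]) hk
    rw [← hinj.tsum_eq hsupp]
    have hterm : ∀ j : ℕ, w n (n + j) = u ^ j := by
      intro j
      have hle : n ≤ n + j := Nat.le_add_right n j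
      simp only [hwdef, if_pos hle]
      rw [show ((n + j : ℕ):ℝ) - (n:ℝ) = (j:ℝ) by push_cast; ring,
        show -((j:ℝ) * T) = (-T) * (j:ℝ) by ring, upow]
    rw [tsum_congr hterm, geom]
  have hJ : ∀ n, (∑' k, if n ≤ k then a k ^ μ else 0) ^ r
      ≤ A ^ (r - 1) * ∑' k, w n k * x n k ^ r := by
    intro n
    calc (∑' k, if n ≤ k then a k ^ μ else 0) ^ r
        = (∑' k, w n k * x n k) ^ r := by
          rw [tsum_congr (hwx n)]
      _ ≤ (∑' k, w n k) ^ (r - 1) * ∑' k, w n k * x n k ^ r :=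
          jensen_tsum_aux hr1 _ _ (by rw [hwsum n]; exact hA)
      _ = A ^ (r - 1) * ∑' k, w n k * x n k ^ r := by rw [hwsum n]
  have hF : ∀ (n k : ℕ), (2:ℝ≥0∞) ^ ((n:ℝ) * θ * q) * (w n k * x n k ^ r) = F n k := by
    intro n k
    by_cases h : n ≤ k
    · simp only [hwdef, hxdef, hFdef, if_pos h]
      have hxr : (a k ^ μ * (2:ℝ≥0∞) ^ (((k:ℝ)-n) * T)) ^ r
          = a k ^ q * 2 ^ (((k:ℝ)-n) * T * r) := by
        rw [ENNReal.mul_rpow_of_nonneg _ _ hrpos.le, ← ENNReal.rpow_mul,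
          ← ENNReal.rpow_mul, hμr]
      rw [hxr]
      have hexp : (k:ℝ) * θ * q - ((k:ℝ)-n) * T
          = ((n:ℝ) * θ * q + -(((k:ℝ)-n) * T)) + ((k:ℝ)-n) * T * r := by
        rw [hTdef, hrdef]; field_simp; ring
      rw [hexp, ENNReal.rpow_add _ _ h2 h2t, ENNReal.rpow_add _ _ h2 h2t]
      ring
    · simp [hwdef, hxdef, hFdef, h]
  have hinner : ∀ k, ∑' n, F n k ≤ (2:ℝ≥0∞) ^ ((k:ℝ) * θ * q) * a k ^ q * A := by
    intro k
    have h1 : ∀ n, F n k = ((2:ℝ≥0∞) ^ ((k:ℝ) * θ * q) * a k ^ q) *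
        (if n ≤ k then (2:ℝ≥0∞) ^ (-(((k:ℝ)-n) * T)) else 0) := by
      intro n
      by_cases h : n ≤ k
      · simp only [hFdef, if_pos h]
        rw [show (k:ℝ) * θ * q - ((k:ℝ)-n) * T = (k:ℝ) * θ * q + -(((k:ℝ)-n) * T) by ring,
          ENNReal.rpow_add _ _ h2 h2t]
        ring
      · simp [hFdef, h]
    rw [tsum_congr h1, ENNReal.tsum_mul_left]
    refine mul_le_mul_right ?_ _
    have h2' : (∑' n : ℕ, if n ≤ k then (2:ℝ≥0∞) ^ (-(((k:ℝ)-n) * T)) else 0)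
        = ∑ n ∈ Finset.range (k+1), if n ≤ k then (2:ℝ≥0∞) ^ (-(((k:ℝ)-n) * T)) else 0 := by
      apply tsum_eq_sum
      intro n hn
      exact if_neg (by simp only [Finset.mem_range] at hn; omega)
    rw [h2']
    have h3 : ∀ n ∈ Finset.range (k+1),
        (if n ≤ k then (2:ℝ≥0∞) ^ (-(((k:ℝ)-n) * T)) else 0) = u ^ (k - n) := by
      intro n hn
      have hnk : n ≤ k := by simpa [Nat.lt_succ_iff] using Finset.mem_range.mp hn
      rw [if_pos hnk, show (k:ℝ) - (n:ℝ) = ((k - n : ℕ):ℝ) by rw [Nat.cast_sub hnk],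
        show -(((k - n : ℕ):ℝ) * T) = (-T) * ((k - n : ℕ):ℝ) by ring, upow]
    rw [Finset.sum_congr rfl h3]
    have h4 : ∑ n ∈ Finset.range (k+1), u ^ (k - n)
        = ∑ j ∈ Finset.range (k+1), u ^ j := by
      have := Finset.sum_range_reflect (fun j => u ^ j) (k+1)
      simpa using this
    rw [h4]
    calc ∑ j ∈ Finset.range (k+1), u ^ j ≤ ∑' j : ℕ, u ^ j := ENNReal.sum_le_tsum _
      _ = A := geom
  have hstep : ∀ (n : ℕ), (2:ℝ≥0∞) ^ ((n:ℝ) * θ * q) *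
      ((∑' k : ℕ, if n ≤ k then (a k) ^ μ else 0) ^ (1/μ)) ^ q
      ≤ A ^ (r - 1) * ∑' k, F n k := by
    intro n
    have hpow : ((∑' k : ℕ, if n ≤ k then (a k) ^ μ else 0) ^ (1/μ)) ^ q
        = (∑' k : ℕ, if n ≤ k then (a k) ^ μ else 0) ^ r := by
      rw [← ENNReal.rpow_mul, show 1/μ * q = r by rw [hrdef]; ring]
    rw [hpow]
    calc (2:ℝ≥0∞) ^ ((n:ℝ) * θ * q) * (∑' k : ℕ, if n ≤ k then (a k) ^ μ else 0) ^ r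
        ≤ (2:ℝ≥0∞) ^ ((n:ℝ) * θ * q) * (A ^ (r - 1) * ∑' k, w n k * x n k ^ r) :=
          mul_le_mul_right (hJ n) _
      _ = A ^ (r - 1) * ((2:ℝ≥0∞) ^ ((n:ℝ) * θ * q) * ∑' k, w n k * x n k ^ r) := by ring
      _ = A ^ (r - 1) * ∑' k, (2:ℝ≥0∞) ^ ((n:ℝ) * θ * q) * (w n k * x n k ^ r) := by
          rw [ENNReal.tsum_mul_left]
      _ = A ^ (r - 1) * ∑' k, F n k := by rw [tsum_congr (hF n)]
  calc (∑' n : ℕ, (2 : ℝ≥0∞) ^ ((n : ℝ) * θ * q) *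
          ((∑' k : ℕ, if n ≤ k then (a k) ^ μ else 0) ^ (1 / μ)) ^ q)
      ≤ ∑' n, A ^ (r - 1) * ∑' k, F n k := ENNReal.tsum_le_tsum hstep
    _ = A ^ (r - 1) * ∑' n, ∑' k, F n k := ENNReal.tsum_mul_left
    _ = A ^ (r - 1) * ∑' k, ∑' n, F n k := by rw [ENNReal.tsum_comm]
    _ ≤ A ^ (r - 1) * ∑' k : ℕ, (2:ℝ≥0∞) ^ ((k:ℝ) * θ * q) * a k ^ q * A :=
        mul_le_mul_right (ENNReal.tsum_le_tsum hinner) _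
    _ = A ^ (r - 1) * ((∑' k : ℕ, (2:ℝ≥0∞) ^ ((k:ℝ) * θ * q) * a k ^ q) * A) := by
        rw [ENNReal.tsum_mul_right]
    _ = (A ^ (r - 1) * A) * ∑' n : ℕ, (2 : ℝ≥0∞) ^ ((n : ℝ) * θ * q) * a n ^ q := by
        rw [mul_comm _ A, ← mul_assoc]
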